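/- Let K be a convex body in ℝ² and let 𝓕 be a family of positive homothets of K. Then 𝓕 does not shatter any set of 4 points; that is, for every set X ⊆ ℝ² with |X| = 4 there exists a subset X' ⊆ X such that no F ∈ 𝓕 satisfies X ∩ F = X'. Consequently the VC-dimension of 𝓕 is at most 3. -/

import Mathlib

open Pointwise
section
variable {V : Type*} [AddCommGroup V] [Module ℝ V]

lemma mem_seg_param {p e : V} {r1 r r2 : ℝ} (h1 : r1 ≤ r) (h2 : r ≤ r2) :
    p + r • e ∈ segment ℝ (p + r1 • e) (p + r2 • e) := by
  rcases eq_or_lt_of_le (h1.trans h2) with h | h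
  · have : r = r1 := le_antisymm (h ▸ h2) h1
    rw [this, ← h]
    exact left_mem_segment _ _ _
  · have hne : r2 - r1 ≠ 0 := sub_ne_zero.mpr h.ne'
    refine ⟨(r2 - r) / (r2 - r1), (r - r1) / (r2 - r1),
      div_nonneg (by linarith) (by linarith), div_nonneg (by linarith) (by linarith), ?_, ?_⟩
    · field_simp; ring
    · match_scalars
      · field_simp; ring
      · field_simp; ring

lemma convex3 {L : Set V} (hL : Convex ℝ L) {x y z : V} (hx : x ∈ L) (hy : y ∈ L) (hz : z ∈ L)
    {w1 w2 w3 : ℝ} (h1 : 0 ≤ w1) (h2 : 0 ≤ w2) (h3 : 0 ≤ w3) (hsum : w1 + w2 + w3 = 1) :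
    w1 • x + w2 • y + w3 • z ∈ L := by
  have := hL.sum_mem (t := (Finset.univ : Finset (Fin 3))) (w := ![w1, w2, w3])
    (z := ![x, y, z]) (by intro i _; fin_cases i <;> simpa) (by simp [Fin.sum_univ_three, hsum])
    (by intro i _; fin_cases i <;> simpa)
  simpa [Fin.sum_univ_three] using this

/-- Key cross-configuration lemma with explicit convex-combination certificates. -/
lemma cross_lemma {L : Set V} (hL : Convex ℝ L) {e1 e2 : V} {β γ ρ s t : ℝ}
    (hβ : 0 < β) (hγ : 0 < γ) (hρ : 1 ≤ ρ) (hs : 0 ≤ s) (ht : 0 ≤ t) {p : V}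
    (hp : p ∈ L) (hb : p - β • e2 ∈ L)
    (hTp : p + s • e1 + t • e2 ∈ L)
    (hTc : p + s • e1 + t • e2 + (ρ * γ) • e1 ∈ L) :
    p + γ • e1 ∈ L ∨ p + s • e1 + t • e2 - (ρ * β) • e2 ∈ L := by
  have hD : 0 < s + ρ * γ := by nlinarith
  rcases le_or_gt (t * γ) (β * s + β * γ * (ρ - 1)) with hc1 | hc1
  · left
    have key : p + γ • e1 =
        (t * γ / (β * (s + ρ * γ))) • (p - β • e2)
        + ((β * s + β * γ * (ρ - 1) - t * γ) / (β * (s + ρ * γ))) • p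
        + (γ / (s + ρ * γ)) • (p + s • e1 + t • e2 + (ρ * γ) • e1) := by
      match_scalars <;> first | (field_simp; ring) | field_simp
    rw [key]
    exact convex3 hL hb hp hTc
      (div_nonneg (by positivity) (by positivity))
      (div_nonneg (by linarith) (by positivity))
      (div_nonneg hγ.le hD.le)
      (by field_simp; ring)
  rcases le_or_gt (t * γ) (β * s + ρ * β * γ) with hc2 | hc2
  · right
    have key : p + s • e1 + t • e2 - (ρ * β) • e2 =
        (ρ * (β * s + ρ * β * γ - t * γ) / (β * (s + ρ * γ))) • (p - β • e2)
        + (ρ * (t * γ - β * s - β * γ * (ρ - 1)) / (β * (s + ρ * γ))) • p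
        + (s / (s + ρ * γ)) • (p + s • e1 + t • e2 + (ρ * γ) • e1) := by
      match_scalars <;> first | (field_simp; ring) | field_simp
    rw [key]
    exact convex3 hL hb hp hTc
      (div_nonneg (by nlinarith) (by positivity))
      (div_nonneg (by nlinarith) (by positivity))
      (div_nonneg hs hD.le)
      (by field_simp; ring)
  · right
    have ht0 : 0 < t := by nlinarith
    have key : p + s • e1 + t • e2 - (ρ * β) • e2 =
        (ρ * β / t) • p
        + ((t * γ - ρ * β * γ - s * β) / (t * γ)) • (p + s • e1 + t • e2)
        + (s * β / (t * γ)) • (p + s • e1 + t • e2 + (ρ * γ) • e1) := by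
      match_scalars <;> first | (field_simp; ring) | field_simp
    rw [key]
    exact convex3 hL hp hTp hTc
      (div_nonneg (by positivity) ht0.le)
      (div_nonneg (by nlinarith) (by positivity))
      (div_nonneg (by positivity) (by positivity))
      (by field_simp; ring)
lemma core_lemma {F1 F2 : Set V} (hF2 : Convex ℝ F2) {ρ : ℝ} (hρ : 1 ≤ ρ) {w : V}
    (hT : ∀ z : V, z ∈ F1 ↔ ρ • z + w ∈ F2)
    {p e1 e2 a c b d : V} {α β : ℝ} (hα : 0 < α) (hβ : 0 < β)
    (hae : a = p - α • e1) (hce : c = p + e1) (hbe : b = p - β • e2) (hde : d = p + e2)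
    (hpF1 : p ∈ F1) (hpF2 : p ∈ F2)
    (haF1 : a ∈ F1) (hcF1 : c ∈ F1) (haF2 : a ∉ F2) (hcF2 : c ∉ F2)
    (hbF2 : b ∈ F2) (hdF2 : d ∈ F2) (hbF1 : b ∉ F1) (hdF1 : d ∉ F1)
    (hcoord : ∀ v : V, ∃ s t : ℝ, v = s • e1 + t • e2) : False := by
  obtain ⟨s, t, hst⟩ := hcoord (ρ • p + w - p)
  have hTpEq : ρ • p + w = p + s • e1 + t • e2 := by
    rw [sub_eq_iff_eq_add] at hst; rw [hst]; abel
  have hTpm : p + s • e1 + t • e2 ∈ F2 := hTpEq ▸ (hT p).mp hpF1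
  have hTa : p + s • e1 + t • e2 - (ρ * α) • e1 ∈ F2 := by
    have h := (hT a).mp haF1
    rwa [hae, show ρ • (p - α • e1) + w = (ρ • p + w) - (ρ * α) • e1 from by module,
      hTpEq] at h
  have hTc : p + s • e1 + t • e2 + ρ • e1 ∈ F2 := by
    have h := (hT c).mp hcF1
    rwa [hce, show ρ • (p + e1) + w = (ρ • p + w) + ρ • e1 from by module, hTpEq] at h
  have hTb : p + s • e1 + t • e2 - (ρ * β) • e2 ∉ F2 := by
    intro h
    apply hbF1
    rw [hT b, hbe, show ρ • (p - β • e2) + w = (ρ • p + w) - (ρ * β) • e2 from by module,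
      hTpEq]
    exact h
  have hTd : p + s • e1 + t • e2 + ρ • e2 ∉ F2 := by
    intro h
    apply hdF1
    rw [hT d, hde, show ρ • (p + e2) + w = (ρ • p + w) + ρ • e2 from by module, hTpEq]
    exact h
  have hbm : p - β • e2 ∈ F2 := hbe ▸ hbF2
  have hdm : p - (1 : ℝ) • (-e2) ∈ F2 := by simpa [hde] using hdF2
  rcases le_total 0 s with hs | hs <;> rcases le_total 0 t with ht | ht
  · -- s ≥ 0, t ≥ 0
    rcases cross_lemma hF2 hβ one_pos hρ hs ht hpF2 hbm hTpm
      (by simpa [mul_one] using hTc) with h | h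
    · exact hcF2 (by simpa [hce] using h)
    · exact hTb h
  · -- s ≥ 0, t ≤ 0 : flip e2
    rcases cross_lemma hF2 (e2 := -e2) (β := 1) (t := -t) one_pos one_pos hρ hs
      (by linarith) hpF2 hdm (by simpa using hTpm) (by simpa [mul_one] using hTc) with h | h
    · exact hcF2 (by simpa [hce] using h)
    · exact hTd (by simpa [mul_one, sub_neg_eq_add] using h)
  · -- s ≤ 0, t ≥ 0 : flip e1
    rcases cross_lemma hF2 (e1 := -e1) (γ := α) (s := -s) hβ hα hρ (by linarith) ht
      hpF2 hbm (by simpa using hTpm) (by simpa [← sub_eq_add_neg] using hTa) with h | h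
    · exact haF2 (by simpa [hae, ← sub_eq_add_neg] using h)
    · exact hTb (by simpa using h)
  · -- s ≤ 0, t ≤ 0 : flip both
    rcases cross_lemma hF2 (e1 := -e1) (e2 := -e2) (γ := α) (β := 1) (s := -s) (t := -t)
      one_pos hα hρ (by linarith) (by linarith) hpF2 hdm (by simpa using hTpm)
      (by simpa [← sub_eq_add_neg] using hTa) with h | h
    · exact haF2 (by simpa [hae, ← sub_eq_add_neg] using h)
    · exact hTd (by simpa [mul_one, sub_neg_eq_add] using h)


lemma homothet_mem {K : Set V} {l1 l2 : ℝ} (h1 : 0 < l1) (h2 : 0 < l2) (x1 x2 z : V)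
    (hz : z ∈ l1 • K + {x1}) :
    (l2 / l1) • z + (x2 - (l2 / l1) • x1) ∈ l2 • K + {x2} := by
  rw [Set.mem_add] at hz ⊢
  obtain ⟨y, hy, x, hx, hyx⟩ := hz
  rw [Set.mem_smul_set] at hy
  obtain ⟨k, hk, rfl⟩ := hy
  rw [Set.mem_singleton_iff] at hx
  subst hx
  refine ⟨l2 • k, Set.smul_mem_smul_set hk, x2, rfl, ?_⟩
  rw [← hyx]
  match_scalars <;> field_simp <;> ring

lemma homothet_iff {K : Set V} {l1 l2 : ℝ} (h1 : 0 < l1) (h2 : 0 < l2) (x1 x2 z : V) :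
    z ∈ l1 • K + {x1} ↔ (l2 / l1) • z + (x2 - (l2 / l1) • x1) ∈ l2 • K + {x2} := by
  refine ⟨homothet_mem h1 h2 x1 x2 z, fun h => ?_⟩
  have h' := homothet_mem h2 h1 x2 x1 _ h
  have e : (l1 / l2) • ((l2 / l1) • z + (x2 - (l2 / l1) • x1)) + (x1 - (l1 / l2) • x2) = z := by
    match_scalars <;> (field_simp; try ring)
  rwa [e] at h'

end

section Inner
set_option maxHeartbeats 2000000 in
open Finset in
lemma inner_lemma [DecidableEq (EuclideanSpace ℝ (Fin 2))]
    (K : Set (EuclideanSpace ℝ (Fin 2))) (hKconv : Convex ℝ K)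
    (𝓕 : Set (Set (EuclideanSpace ℝ (Fin 2))))
    (h𝓕 : ∀ A ∈ 𝓕, ∃ lam : ℝ, 0 < lam ∧ ∃ x : EuclideanSpace ℝ (Fin 2), A = lam • K + {x})
    (X : Finset (EuclideanSpace ℝ (Fin 2)))
    (hdeg : ∀ q ∈ X, q ∉ convexHull ℝ (↑(X.erase q) : Set (EuclideanSpace ℝ (Fin 2))))
    {A C B D pt : EuclideanSpace ℝ (Fin 2)}
    (hAX : A ∈ X) (hCX : C ∈ X) (hBX : B ∈ X) (hDX : D ∈ X)
    (hAC : A ≠ C) (hAB : A ≠ B) (hAD : A ≠ D) (hCB : C ≠ B) (hCD : C ≠ D) (hBD : B ≠ D)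
    (hp1 : pt ∈ segment ℝ A C) (hp2 : pt ∈ segment ℝ B D) :
    ∃ X' ⊆ X, ∀ F ∈ 𝓕, (↑X : Set (EuclideanSpace ℝ (Fin 2))) ∩ F ≠ ↑X' := by
  classical
  have hconv : ∀ F ∈ 𝓕, Convex ℝ F := fun F hF => by
    obtain ⟨lam, hlam, x, rfl⟩ := h𝓕 F hF
    exact (hKconv.smul lam).add (convex_singleton x)
  by_cases h1 : ∃ F1 ∈ 𝓕, (↑X : Set (EuclideanSpace ℝ (Fin 2))) ∩ F1 = ↑({A, C} : Finset _)
  case neg =>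
    push_neg at h1
    exact ⟨{A, C}, by simp [Finset.insert_subset_iff, hAX, hCX], h1⟩
  obtain ⟨F1, hF1m, hF1tr⟩ := h1
  refine ⟨{B, D}, by simp [Finset.insert_subset_iff, hBX, hDX], fun F2 hF2m hF2tr => ?_⟩
  -- memberships w.r.t. F1
  have hA1 : A ∈ F1 := by
    have : A ∈ (↑X ∩ F1 : Set _) := by rw [hF1tr]; simp
    exact this.2
  have hC1 : C ∈ F1 := by
    have : C ∈ (↑X ∩ F1 : Set _) := by rw [hF1tr]; simp
    exact this.2
  have hB1 : B ∉ F1 := by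
    intro h
    have : B ∈ (↑X ∩ F1 : Set _) := ⟨by exact_mod_cast hBX, h⟩
    rw [hF1tr] at this
    simp only [Finset.coe_insert, Finset.coe_singleton, Set.mem_insert_iff,
      Set.mem_singleton_iff] at this
    rcases this with h' | h'
    · exact hAB h'.symm
    · exact hCB h'.symm
  have hD1 : D ∉ F1 := by
    intro h
    have : D ∈ (↑X ∩ F1 : Set _) := ⟨by exact_mod_cast hDX, h⟩
    rw [hF1tr] at this
    simp only [Finset.coe_insert, Finset.coe_singleton, Set.mem_insert_iff,
      Set.mem_singleton_iff] at this
    rcases this with h' | h'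
    · exact hAD h'.symm
    · exact hCD h'.symm
  have hB2 : B ∈ F2 := by
    have : B ∈ (↑X ∩ F2 : Set _) := by rw [hF2tr]; simp
    exact this.2
  have hD2 : D ∈ F2 := by
    have : D ∈ (↑X ∩ F2 : Set _) := by rw [hF2tr]; simp
    exact this.2
  have hA2 : A ∉ F2 := by
    intro h
    have : A ∈ (↑X ∩ F2 : Set _) := ⟨by exact_mod_cast hAX, h⟩
    rw [hF2tr] at this
    simp only [Finset.coe_insert, Finset.coe_singleton, Set.mem_insert_iff,
      Set.mem_singleton_iff] at this
    rcases this with h' | h'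
    · exact hAB h'
    · exact hAD h'
  have hC2 : C ∉ F2 := by
    intro h
    have : C ∈ (↑X ∩ F2 : Set _) := ⟨by exact_mod_cast hCX, h⟩
    rw [hF2tr] at this
    simp only [Finset.coe_insert, Finset.coe_singleton, Set.mem_insert_iff,
      Set.mem_singleton_iff] at this
    rcases this with h' | h'
    · exact hCB h'
    · exact hCD h'
  have hF1conv := hconv F1 hF1m
  have hF2conv := hconv F2 hF2m
  have hpt1 : pt ∈ F1 := hF1conv.segment_subset hA1 hC1 hp1
  have hpt2 : pt ∈ F2 := hF2conv.segment_subset hB2 hD2 hp2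
  -- strict interior coefficients
  obtain ⟨u, v, hu, hv, huv, hps⟩ := hp1
  have hu0 : 0 < u := by
    rcases hu.lt_or_eq with h | h
    · exact h
    · exfalso
      rw [← h, zero_smul, zero_add] at hps
      have hv1 : v = 1 := by linarith
      rw [hv1, one_smul] at hps
      exact hC2 (hps ▸ hpt2)
  have hv0 : 0 < v := by
    rcases hv.lt_or_eq with h | h
    · exact h
    · exfalso
      rw [← h, zero_smul, add_zero] at hps
      have hu1 : u = 1 := by linarith
      rw [hu1, one_smul] at hps
      exact hA2 (hps ▸ hpt2)
  obtain ⟨u', v', hu', hv', huv', hps'⟩ := hp2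
  have hu'0 : 0 < u' := by
    rcases hu'.lt_or_eq with h | h
    · exact h
    · exfalso
      rw [← h, zero_smul, zero_add] at hps'
      have : v' = 1 := by linarith
      rw [this, one_smul] at hps'
      exact hD1 (hps' ▸ hpt1)
  have hv'0 : 0 < v' := by
    rcases hv'.lt_or_eq with h | h
    · exact h
    · exfalso
      rw [← h, zero_smul, add_zero] at hps'
      have : u' = 1 := by linarith
      rw [this, one_smul] at hps'
      exact hB1 (hps' ▸ hpt1)
  have hα : (0:ℝ) < v / u := div_pos hv0 hu0
  have hβ : (0:ℝ) < v' / u' := div_pos hv'0 hu'0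
  have hae : A = pt - (v / u) • (C - pt) := by
    have h' : u • A = pt - v • C := eq_sub_of_add_eq hps
    have h'' : A = u⁻¹ • (pt - v • C) := by rw [← h', inv_smul_smul₀ hu0.ne']
    rw [h'']
    match_scalars <;> field_simp <;> linarith
  have hbe : B = pt - (v' / u') • (D - pt) := by
    have h' : u' • B = pt - v' • D := eq_sub_of_add_eq hps'
    have h'' : B = u'⁻¹ • (pt - v' • D) := by rw [← h', inv_smul_smul₀ hu'0.ne']
    rw [h'']
    match_scalars <;> field_simp <;> linarith
  have hce : C = pt + (C - pt) := by abel
  have hde : D = pt + (D - pt) := by abel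
  -- collinear degenerate case
  by_cases hcol : ∃ μ : ℝ, (D - pt) = μ • (C - pt)
  · obtain ⟨μ, hμ⟩ := hcol
    have hDpt : D ≠ pt := fun h => hD1 (h ▸ hpt1)
    have hμ0 : μ ≠ 0 := by
      rintro rfl
      rw [zero_smul, sub_eq_zero] at hμ
      exact hDpt hμ
    have hA' : A = pt + (-(v / u)) • (C - pt) := by rw [hae]; module
    have hC' : C = pt + (1 : ℝ) • (C - pt) := by module
    have hB' : B = pt + (-(v' / u' * μ)) • (C - pt) := by rw [hbe, hμ]; module
    have hD' : D = pt + μ • (C - pt) := by rw [← hμ]; abel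
    have hmem : ∀ q ∈ X, ∀ r1 r2 : EuclideanSpace ℝ (Fin 2), r1 ∈ X.erase q →
        r2 ∈ X.erase q → q ∈ segment ℝ r1 r2 → False := fun q hq r1 r2 hr1 hr2 hseg =>
      hdeg q hq (segment_subset_convexHull (Finset.mem_coe.mpr hr1) (Finset.mem_coe.mpr hr2) hseg)
    rcases le_or_gt μ 0 with hμneg | hμpos
    · have hμn : μ < 0 := lt_of_le_of_ne hμneg hμ0
      have hpos : (0:ℝ) < -(v' / u' * μ) := by nlinarith
      rcases le_total (-(v' / u' * μ)) 1 with hle | hle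
      · -- B lies between A and C
        refine hmem B hBX A C (Finset.mem_erase.mpr ⟨hAB, hAX⟩)
          (Finset.mem_erase.mpr ⟨hCB, hCX⟩) ?_
        have := mem_seg_param (p := pt) (e := C - pt) (r1 := -(v/u)) (r := -(v'/u'*μ))
          (r2 := 1) (by linarith) hle
        rwa [← hA', ← hB', ← hC'] at this
      · -- C lies between D and B
        refine hmem C hCX D B (Finset.mem_erase.mpr ⟨hCD.symm, hDX⟩)
          (Finset.mem_erase.mpr ⟨hCB.symm, hBX⟩) ?_
        have := mem_seg_param (p := pt) (e := C - pt) (r1 := μ) (r := 1)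
          (r2 := -(v'/u'*μ)) (by linarith) hle
        rwa [← hC', ← hD', ← hB'] at this
    · rcases le_total μ 1 with hle | hle
      · -- D lies between A and C
        refine hmem D hDX A C (Finset.mem_erase.mpr ⟨hAD, hAX⟩)
          (Finset.mem_erase.mpr ⟨hCD, hCX⟩) ?_
        have := mem_seg_param (p := pt) (e := C - pt) (r1 := -(v/u)) (r := μ)
          (r2 := 1) (by linarith) hle
        rwa [← hD', ← hA', ← hC'] at this
      · -- C lies between A and D
        refine hmem C hCX A D (Finset.mem_erase.mpr ⟨hAC, hAX⟩)
          (Finset.mem_erase.mpr ⟨hCD.symm, hDX⟩) ?_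
        have := mem_seg_param (p := pt) (e := C - pt) (r1 := -(v/u)) (r := 1)
          (r2 := μ) (by linarith) hle
        rwa [← hC', ← hA', ← hD'] at this
  · -- non-degenerate case
    have hCpt : C - pt ≠ 0 := sub_ne_zero.mpr (fun h => hC2 (h ▸ hpt2))
    have hli : LinearIndependent ℝ ![C - pt, D - pt] := by
      rw [LinearIndependent.pair_iff]
      intro sx tx hst
      by_cases htx : tx = 0
      · subst htx
        rw [zero_smul, add_zero, smul_eq_zero] at hst
        exact ⟨hst.resolve_right hCpt, rfl⟩
      · exfalso
        apply hcol
        refine ⟨-sx / tx, ?_⟩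
        have h1 : tx • (D - pt) = (-sx) • (C - pt) := by
          rw [neg_smul, ← sub_eq_zero]
          rw [← hst]; abel
        have := congrArg (fun z => tx⁻¹ • z) h1
        simpa [smul_smul, inv_mul_cancel₀ htx, div_eq_inv_mul, mul_comm] using this
    have hcoord : ∀ vv : EuclideanSpace ℝ (Fin 2),
        ∃ sx tx : ℝ, vv = sx • (C - pt) + tx • (D - pt) := by
      intro vv
      have hsp : Submodule.span ℝ (Set.range ![C - pt, D - pt]) = ⊤ :=
        hli.span_eq_top_of_card_eq_finrank (by rw [Fintype.card_fin, finrank_euclideanSpace_fin])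
      have hr : Set.range ![C - pt, D - pt] = {C - pt, D - pt} := by
        ext x
        simp only [Set.mem_range, Fin.exists_fin_two, Set.mem_insert_iff, Set.mem_singleton_iff]
        simp only [Matrix.cons_val_zero, Matrix.cons_val_one, Matrix.head_cons]
        tauto
      have hv2 : vv ∈ Submodule.span ℝ ({C - pt, D - pt} : Set (EuclideanSpace ℝ (Fin 2))) := by
        rw [← hr, hsp]; exact Submodule.mem_top
      obtain ⟨sx, tx, h⟩ := Submodule.mem_span_pair.mp hv2
      exact ⟨sx, tx, h.symm⟩
    obtain ⟨l1, hl1, x1, hF1eq⟩ := h𝓕 F1 hF1m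
    obtain ⟨l2, hl2, x2, hF2eq⟩ := h𝓕 F2 hF2m
    have hT12 : ∀ z : EuclideanSpace ℝ (Fin 2),
        z ∈ F1 ↔ (l2 / l1) • z + (x2 - (l2 / l1) • x1) ∈ F2 := by
      intro z
      rw [hF1eq, hF2eq]
      exact homothet_iff hl1 hl2 x1 x2 z
    have hT21 : ∀ z : EuclideanSpace ℝ (Fin 2),
        z ∈ F2 ↔ (l1 / l2) • z + (x1 - (l1 / l2) • x2) ∈ F1 := by
      intro z
      rw [hF1eq, hF2eq]
      exact homothet_iff hl2 hl1 x2 x1 z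
    rcases le_total l1 l2 with hll | hll
    · exact core_lemma hF2conv ((one_le_div hl1).mpr hll) hT12 hα hβ hae hce hbe hde
        hpt1 hpt2 hA1 hC1 hA2 hC2 hB2 hD2 hB1 hD1 hcoord
    · exact core_lemma hF1conv ((one_le_div hl2).mpr hll) hT21 hβ hα hbe hde hae hce
        hpt2 hpt1 hB2 hD2 hB1 hD1 hA1 hC1 hA2 hC2
        (fun vv => by obtain ⟨sx, tx, h⟩ := hcoord vv; exact ⟨tx, sx, by rw [h]; abel⟩)
end Inner
set_option maxHeartbeats 2000000 in
/-- A family of positive homothets of a convex body in the plane shatters no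
set of four points; hence its VC-dimension is at most 3. -/
theorem vcDim_homothets_plane_le_three
    (K : Set (EuclideanSpace ℝ (Fin 2)))
    (hKc : IsCompact K) (hKconv : Convex ℝ K) (hKint : (interior K).Nonempty)
    (𝓕 : Set (Set (EuclideanSpace ℝ (Fin 2))))
    (h𝓕 : ∀ A ∈ 𝓕, ∃ lam : ℝ, 0 < lam ∧ ∃ x : EuclideanSpace ℝ (Fin 2), A = lam • K + {x}) :
    ∀ X : Finset (EuclideanSpace ℝ (Fin 2)), X.card = 4 →
      ∃ X' ⊆ X, ∀ F ∈ 𝓕, (↑X : Set (EuclideanSpace ℝ (Fin 2))) ∩ F ≠ ↑X' := by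
  classical
  intro X hX4
  have hconv : ∀ F ∈ 𝓕, Convex ℝ F := fun F hF => by
    obtain ⟨lam, hlam, x, rfl⟩ := h𝓕 F hF
    exact (hKconv.smul lam).add (convex_singleton x)
  by_cases hdeg : ∃ q ∈ X, q ∈ convexHull ℝ (↑(X.erase q) : Set (EuclideanSpace ℝ (Fin 2)))
  · obtain ⟨q, hqX, hq⟩ := hdeg
    refine ⟨X.erase q, X.erase_subset q, fun F hF htr => ?_⟩
    have hsub : (↑(X.erase q) : Set (EuclideanSpace ℝ (Fin 2))) ⊆ F := fun z hz => by
      rw [← htr] at hz; exact hz.2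
    have hqF : q ∈ F := convexHull_min hsub (hconv F hF) hq
    have hmem : q ∈ (↑X ∩ F : Set (EuclideanSpace ℝ (Fin 2))) := ⟨by exact_mod_cast hqX, hqF⟩
    rw [htr] at hmem
    simp at hmem
  push_neg at hdeg
  obtain ⟨a0, s0, ha0, rfl, hs3⟩ := Finset.card_eq_succ.mp hX4
  obtain ⟨b0, c0, d0, hbc, hbd, hcd, rfl⟩ := Finset.card_eq_three.mp hs3
  have hab : a0 ≠ b0 := by intro h; apply ha0; simp [h]
  have hac : a0 ≠ c0 := by intro h; apply ha0; simp [h]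
  have had : a0 ≠ d0 := by intro h; apply ha0; simp [h]
  set f : Fin 4 → EuclideanSpace ℝ (Fin 2) := ![a0, b0, c0, d0] with hf
  have hfX : ∀ i, f i ∈ insert a0 ({b0, c0, d0} : Finset (EuclideanSpace ℝ (Fin 2))) := by
    intro i; fin_cases i <;> simp [hf]
  have hfne : ∀ i j : Fin 4, i ≠ j → f i ≠ f j := by
    intro i j hij
    fin_cases i <;> fin_cases j <;>
      first
        | exact absurd rfl hij
        | (simp only [hf, Matrix.cons_val_zero, Matrix.cons_val_one, Matrix.head_cons,
            Matrix.cons_val_two, Matrix.tail_cons, Matrix.cons_val_three]; tauto)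
  have hnAI : ¬ AffineIndependent ℝ f := by
    intro hAI
    have h1 := hAI.card_le_finrank_succ
    have h2 : Module.finrank ℝ (vectorSpan ℝ (Set.range f)) ≤
        Module.finrank ℝ (EuclideanSpace ℝ (Fin 2)) := Submodule.finrank_le _
    rw [finrank_euclideanSpace_fin] at h2
    rw [Fintype.card_fin] at h1
    omega
  obtain ⟨I, pt, hp1, hp2⟩ := Convex.radon_partition hnAI
  have hsingle : ∀ (S : Set (Fin 4)) (i : Fin 4), (∀ j, j ∈ S ↔ j = i) →
      pt ∈ convexHull ℝ (f '' S) → pt ∈ convexHull ℝ (f '' Sᶜ) → False := by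
    intro S i hS h1 h2
    have him : f '' S = {f i} := by
      ext z
      constructor
      · rintro ⟨m, hm, rfl⟩; rw [(hS m).mp hm]; exact Set.mem_singleton _
      · rintro h; exact ⟨i, (hS i).mpr rfl, h.symm⟩
    rw [him, convexHull_singleton, Set.mem_singleton_iff] at h1
    have hsub : f '' Sᶜ ⊆ (↑((insert a0 ({b0, c0, d0} : Finset _)).erase (f i)) :
        Set (EuclideanSpace ℝ (Fin 2))) := by
      rintro z ⟨j, hj, rfl⟩
      simp only [Finset.coe_erase, Set.mem_diff, Set.mem_singleton_iff]
      exact ⟨by exact_mod_cast hfX j, hfne j i (fun h => hj ((hS j).mpr h))⟩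
    exact hdeg (f i) (hfX i) (h1 ▸ convexHull_mono hsub h2)
  set J : Finset (Fin 4) := Finset.univ.filter (· ∈ I) with hJ
  have hJI : ∀ j, j ∈ J ↔ j ∈ I := by intro j; simp [hJ]
  have hJcard : J.card ≤ 4 := le_trans (Finset.card_le_univ J) (by simp)
  interval_cases hc : J.card
  · -- card 0 : I empty
    exfalso
    have : I = ∅ := by
      ext j
      simp only [Set.mem_empty_iff_false, iff_false]
      intro hj
      have : j ∈ J := (hJI j).mpr hj
      rw [Finset.card_eq_zero.mp hc] at this
      simp at this
    rw [this] at hp1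
    simp [convexHull_empty] at hp1
  · -- card 1
    exfalso
    obtain ⟨i, hi⟩ := Finset.card_eq_one.mp hc
    refine hsingle I i (fun j => ?_) hp1 hp2
    rw [← hJI j, hi, Finset.mem_singleton]
  · -- card 2 : main case
    obtain ⟨i, j, hij, hJij⟩ := Finset.card_eq_two.mp hc
    have hJc : (Finset.univ \ J).card = 2 := by
      rw [Finset.card_sdiff_of_subset (Finset.subset_univ J), Finset.card_univ, Fintype.card_fin, hc]
    obtain ⟨k, l, hkl, hJkl⟩ := Finset.card_eq_two.mp hJc
    have hkJ : k ∉ J := by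
      have : k ∈ Finset.univ \ J := by rw [hJkl]; simp
      exact (Finset.mem_sdiff.mp this).2
    have hlJ : l ∉ J := by
      have : l ∈ Finset.univ \ J := by rw [hJkl]; simp
      exact (Finset.mem_sdiff.mp this).2
    have hiJ : i ∈ J := by rw [hJij]; simp
    have hjJ : j ∈ J := by rw [hJij]; simp
    have hik : i ≠ k := fun h => hkJ (h ▸ hiJ)
    have hil : i ≠ l := fun h => hlJ (h ▸ hiJ)
    have hjk : j ≠ k := fun h => hkJ (h ▸ hjJ)
    have hjl : j ≠ l := fun h => hlJ (h ▸ hjJ)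
    have hiI : i ∈ I := (hJI i).mp hiJ
    have hjI : j ∈ I := (hJI j).mp hjJ
    have hkI : k ∉ I := fun h => hkJ ((hJI k).mpr h)
    have hlI : l ∉ I := fun h => hlJ ((hJI l).mpr h)
    have him1 : f '' I = {f i, f j} := by
      ext z
      constructor
      · rintro ⟨m, hm, rfl⟩
        have : m ∈ J := (hJI m).mpr hm
        rw [hJij] at this
        rcases Finset.mem_insert.mp this with h | h
        · rw [h]; exact Set.mem_insert _ _
        · rw [Finset.mem_singleton.mp h]; exact Set.mem_insert_of_mem _ rfl
      · rintro (h | h)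
        · exact ⟨i, hiI, h.symm⟩
        · exact ⟨j, hjI, h.symm⟩
    have him2 : f '' Iᶜ = {f k, f l} := by
      ext z
      constructor
      · rintro ⟨m, hm, rfl⟩
        have hmJ : m ∉ J := fun h => hm ((hJI m).mp h)
        have : m ∈ Finset.univ \ J := Finset.mem_sdiff.mpr ⟨Finset.mem_univ m, hmJ⟩
        rw [hJkl] at this
        rcases Finset.mem_insert.mp this with h | h
        · rw [h]; exact Set.mem_insert _ _
        · rw [Finset.mem_singleton.mp h]; exact Set.mem_insert_of_mem _ rfl
      · rintro (h | h)
        · exact ⟨k, hkI, h.symm⟩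
        · exact ⟨l, hlI, h.symm⟩
    rw [him1, convexHull_pair] at hp1
    rw [him2, convexHull_pair] at hp2
    exact inner_lemma K hKconv 𝓕 h𝓕 _ hdeg (hfX i) (hfX j) (hfX k) (hfX l)
      (hfne i j hij) (hfne i k hik) (hfne i l hil) (hfne j k hjk) (hfne j l hjl)
      (hfne k l hkl) hp1 hp2
  · -- card 3
    exfalso
    have hJc : (Finset.univ \ J).card = 1 := by
      rw [Finset.card_sdiff_of_subset (Finset.subset_univ J), Finset.card_univ, Fintype.card_fin, hc]
    obtain ⟨i, hi⟩ := Finset.card_eq_one.mp hJc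
    refine hsingle Iᶜ i (fun j => ?_) hp2 (by rw [compl_compl]; exact hp1)
    constructor
    · intro hj
      have : j ∈ Finset.univ \ J := Finset.mem_sdiff.mpr ⟨Finset.mem_univ j,
        fun h => hj ((hJI j).mp h)⟩
      rw [hi] at this
      exact Finset.mem_singleton.mp this
    · rintro rfl hjI
      have : j ∈ Finset.univ \ J := by rw [hi]; simp
      exact (Finset.mem_sdiff.mp this).2 ((hJI j).mpr hjI)
  · -- card 4 : Iᶜ empty
    exfalso
    have hu : J = Finset.univ := Finset.eq_univ_of_card J (by rw [hc]; simp)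
    have : Iᶜ = ∅ := by
      ext j
      simp only [Set.mem_empty_iff_false, iff_false, Set.mem_compl_iff, not_not]
      exact (hJI j).mp (hu ▸ Finset.mem_univ j)
    rw [this] at hp2
    simp [convexHull_empty] at hp2
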